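/- The weighted count of degree-d covers of a closed genus-g surface, Z⁰_d(g) = the genus-g closed invariant of the Frobenius algebra Z(ℚ[S_d]) with counit μ(Σ a_g g) = a_Id/d!, equals Σ_R (d!/dim R)^{2g−2}, the sum over irreducible representations R of S_d. -/

import Mathlib

open TensorProduct

set_option maxHeartbeats 1000000
set_option synthInstance.maxHeartbeats 400000

/-- **Counting unramified covers via representation theory.**
Let `A` be the Frobenius algebra `Z(ℚ[S_d])` (a commutative Frobenius `ℚ`-algebra
with counit `μ(∑ a_g g) = a_Id/d!`): it is semisimple with an orthogonal idempotent
basis `v_R` indexed by the irreducible representations `R` of `S_d`, satisfying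
`μ(v_R) = (dim R/d!)²`.  Then the genus-`g` closed invariant — `μ(H^g(1))` for the
handle operator `H = m∘Δ` — equals `∑_R (d!/dim R)^{2g−2}`. -/
theorem hurwitz_closed_invariant
    {A : Type*} [CommRing A] [Algebra ℚ A]
    (d : ℕ) (hd : 0 < d)
    {ι : Type*} [Fintype ι]   -- indexes the irreducible representations of `S_d`
    (dimR : ι → ℕ) (hdim : ∀ i, 0 < dimR i)
    (Δ : A →ₗ[ℚ] A ⊗[ℚ] A) (μ : A →ₗ[ℚ] ℚ)
    (hcounitR : ∀ a : A, (TensorProduct.rid ℚ A) (TensorProduct.map LinearMap.id μ (Δ a)) = a)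
    (hcounitL : ∀ a : A, (TensorProduct.lid ℚ A) (TensorProduct.map μ LinearMap.id (Δ a)) = a)
    (hfrob : ∀ a b : A, Δ (a * b) = TensorProduct.map (LinearMap.mul' ℚ A) LinearMap.id
      ((TensorProduct.assoc ℚ A A A).symm (a ⊗ₜ[ℚ] Δ b)))
    (v : ι → A) (b : Module.Basis ι ℚ A) (hb : ∀ i, b i = v i)
    (hid : ∀ i, v i * v i = v i)
    (horth : ∀ i j, i ≠ j → v i * v j = 0)
    (hμv : ∀ i, μ (v i) = ((dimR i : ℚ) / d.factorial) ^ 2)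
    (g : ℕ) :
    μ ((fun a => LinearMap.mul' ℚ A (Δ a))^[g] 1) =
      ∑ i, ((d.factorial : ℚ) / dimR i) ^ (2 * (g : ℤ) - 2) := by
  classical
  set x : ι → ℚ := fun i => (d.factorial : ℚ) / dimR i with hx
  have hx0 : ∀ i, x i ≠ 0 := by
    intro i
    exact div_ne_zero (Nat.cast_ne_zero.mpr (Nat.factorial_ne_zero d))
      (Nat.cast_ne_zero.mpr (hdim i).ne')
  have hμ' : ∀ i, μ (v i) = (x i ^ 2)⁻¹ := by
    intro i
    rw [hμv i, hx]
    rw [← inv_pow, inv_div]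
  -- basis of the tensor square
  set B : Module.Basis (ι × ι) ℚ (A ⊗[ℚ] A) := Module.Basis.tensorProduct b b with hB
  set C : ι × ι → ℚ := fun p => B.repr (Δ 1) p with hCdef
  have hΔ1 : Δ (1:A) = ∑ p : ι × ι, C p • (v p.1 ⊗ₜ[ℚ] v p.2) := by
    conv_lhs => rw [← B.sum_repr (Δ 1)]
    refine Finset.sum_congr rfl fun p _ => ?_
    simp [hB, Module.Basis.tensorProduct_apply', hb, hCdef]
  have hΔ : ∀ a : A, Δ a = ∑ p : ι × ι, C p • ((a * v p.1) ⊗ₜ[ℚ] v p.2) := by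
    intro a
    have h := hfrob a 1
    rw [mul_one] at h
    rw [h, hΔ1, TensorProduct.tmul_sum, map_sum, map_sum]
    refine Finset.sum_congr rfl fun p _ => ?_
    simp [TensorProduct.tmul_smul, TensorProduct.assoc_symm_tmul,
      TensorProduct.map_tmul, LinearMap.mul'_apply]
  -- diagonal coefficients
  have hC_diag : ∀ i, C (i, i) * μ (v i) = 1 := by
    intro i
    have h1 := hcounitL (v i)
    rw [hΔ (v i), map_sum, map_sum] at h1
    have h2 : ∑ p : ι × ι, C p • (μ (v i * v p.1) • v p.2) = v i := by
      simpa [TensorProduct.map_tmul, TensorProduct.lid_tmul, smul_smul, mul_comm] using h1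
    have h3 := congrArg (fun z => z * v i) h2
    simp only [Finset.sum_mul, smul_mul_assoc] at h3
    have hsum1 : ∑ p : ι × ι, C p • (μ (v i * v p.1) • v p.2) * v i
        = (C (i, i) * μ (v i)) • v i := by
      rw [Finset.sum_eq_single (i, i)]
      · simp [hid, smul_smul]
      · intro p _ hp
        rcases ne_or_eq p.1 i with h | h
        · have h0 : v i * v p.1 = 0 := horth _ _ (Ne.symm h)
          simp [h0]
        · have h2' : p.2 ≠ i := by
            intro hh; exact hp (Prod.ext h hh)
          simp [horth _ _ h2']
      · simp
    have h4 : (C (i, i) * μ (v i)) • v i = v i := by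
      rw [← hsum1]
      simpa [hid i] using h3
    have h5 := congrArg (fun z => b.repr z i) h4
    simpa [← hb, map_smul, Module.Basis.repr_self] using h5
  have hC_diag' : ∀ i, C (i, i) = x i ^ 2 := by
    intro i
    have h := hC_diag i
    rw [hμ' i] at h
    exact (mul_inv_eq_one₀ (pow_ne_zero 2 (hx0 i))).mp h
  -- 1 is the sum of the idempotents
  have hone : (1 : A) = ∑ j, v j := by
    have hsum := b.sum_repr 1
    have hc : ∀ i, b.repr 1 i = 1 := by
      intro i
      have hsum2 : ∑ j, v i * ((b.repr 1) j • b j) = (b.repr 1) i • v i := by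
        rw [Finset.sum_eq_single i]
        · simp [hb, mul_smul_comm, hid]
        · intro j _ hj
          simp [hb, mul_smul_comm, horth _ _ (Ne.symm hj)]
        · simp
      have h2 : (b.repr 1) i • v i = v i := by
        rw [← hsum2, ← Finset.mul_sum, hsum, mul_one]
      have h3 := congrArg (fun z => b.repr z i) h2
      simpa [← hb, map_smul, Module.Basis.repr_self] using h3
    calc (1 : A) = ∑ j, b.repr 1 j • b j := hsum.symm
      _ = ∑ j, v j := by simp [hc, hb]
  -- handle operator
  have hH : ∀ a : A, LinearMap.mul' ℚ A (Δ a) = a * ∑ j, (x j ^ 2) • v j := by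
    intro a
    rw [hΔ a, map_sum, Finset.mul_sum, Fintype.sum_prod_type]
    refine Finset.sum_congr rfl fun j _ => ?_
    rw [Finset.sum_eq_single j]
    · simp [LinearMap.mul'_apply, hC_diag', mul_assoc, hid, mul_smul_comm, smul_smul]
    · intro k _ hk
      have h0 : a * v j * v k = 0 := by rw [mul_assoc, horth _ _ (Ne.symm hk), mul_zero]
      simp [LinearMap.mul'_apply, h0]
    · simp
  have hiter : ∀ n : ℕ, (fun a => LinearMap.mul' ℚ A (Δ a))^[n] 1 = ∑ j, ((x j ^ 2) ^ n) • v j := by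
    intro n
    induction n with
    | zero => simpa using hone
    | succ n ih =>
      rw [Function.iterate_succ_apply', ih, hH, Finset.sum_mul]
      refine Finset.sum_congr rfl fun j _ => ?_
      rw [Finset.mul_sum, Finset.sum_eq_single j]
      · rw [smul_mul_assoc, mul_smul_comm, hid, smul_smul, ← pow_succ]
      · intro k _ hk
        simp [smul_mul_assoc, mul_smul_comm, horth _ _ (Ne.symm hk)]
      · simp
  rw [hiter g, map_sum]
  refine Finset.sum_congr rfl fun j _ => ?_
  rw [map_smul, hμ' j, smul_eq_mul]
  have hj : x j ≠ 0 := hx0 j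
  have h1 : (2 * (g : ℤ) - 2) = 2 * ((g : ℤ) - 1) := by ring
  rw [h1, zpow_mul]
  have h2 : x j ^ (2 : ℤ) = x j ^ 2 := by rw [zpow_two, pow_two]
  rw [h2, zpow_sub₀ (pow_ne_zero 2 hj), zpow_one, zpow_natCast, div_eq_mul_inv]
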